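/- arXiv:1704.03486 — 6 statements merged into one kernel-verified Lean document; each statement's English description precedes it below -/
import Mathlib

section
/- For any matrix M ∈ ℂ^{n×n}, per(M) = (1/n!) · 1_{Sₙ}† M^{⊗n} 1_{Sₙ}, where 1_{Sₙ} ∈ ℂ^{nⁿ} is the indicator vector of permutations: its coordinate indexed by σ ∈ [n]^[n] is 1 if σ is a permutation of [n], and 0 otherwise. -/
open scoped Matrix

noncomputable def perm {n : ℕ} (M : Matrix (Fin n) (Fin n) ℂ) : ℂ :=
  ∑ σ : Equiv.Perm (Fin n), ∏ i, M i (σ i)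

private lemma sum_bij_ind {n : ℕ} (g : (Fin n → Fin n) → ℂ) :
    ∑ f : Fin n → Fin n, (if Function.Bijective f then g f else 0)
      = ∑ s : Equiv.Perm (Fin n), g ⇑s := by
  classical
  rw [← Finset.sum_filter]
  refine Finset.sum_bij' (fun f hf => Equiv.ofBijective f (Finset.mem_filter.mp hf).2)
    (fun s _ => ⇑s) ?_ ?_ ?_ ?_ ?_
  · intro f hf; exact Finset.mem_univ _
  · intro s _; exact Finset.mem_filter.mpr ⟨Finset.mem_univ _, s.bijective⟩
  · intro f hf; rfl
  · intro s _; ext x; rfl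
  · intro f hf; rfl

theorem perm_eq_tensor_form (n : ℕ) (M : Matrix (Fin n) (Fin n) ℂ) :
    perm M = (1 / n.factorial : ℂ) *
      ∑ σ : Fin n → Fin n, ∑ τ : Fin n → Fin n,
        (starRingEnd ℂ) (if Function.Bijective σ then (1 : ℂ) else 0) *
          (∏ i, M (σ i) (τ i)) *
          (if Function.Bijective τ then (1 : ℂ) else 0) := by
  classical
  have h1 : ∀ σ τ : Fin n → Fin n,
      (starRingEnd ℂ) (if Function.Bijective σ then (1 : ℂ) else 0) *
        (∏ i, M (σ i) (τ i)) * (if Function.Bijective τ then (1 : ℂ) else 0)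
      = (if Function.Bijective σ then
          (if Function.Bijective τ then (∏ i, M (σ i) (τ i)) else 0) else 0) := by
    intro σ τ
    split_ifs <;> simp [mul_comm]
  have h2 : (∑ σ : Fin n → Fin n, ∑ τ : Fin n → Fin n,
        (starRingEnd ℂ) (if Function.Bijective σ then (1 : ℂ) else 0) *
          (∏ i, M (σ i) (τ i)) * (if Function.Bijective τ then (1 : ℂ) else 0))
      = ∑ s : Equiv.Perm (Fin n), ∑ t : Equiv.Perm (Fin n), ∏ i, M (s i) (t i) := by
    simp_rw [h1]
    have step : ∀ σ : Fin n → Fin n,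
        (∑ τ : Fin n → Fin n, if Function.Bijective σ then
            (if Function.Bijective τ then (∏ i, M (σ i) (τ i)) else 0) else 0)
        = (if Function.Bijective σ then
            (∑ τ : Fin n → Fin n, if Function.Bijective τ then (∏ i, M (σ i) (τ i)) else 0)
            else 0) := by
      intro σ; split_ifs with h <;> simp
    simp_rw [step]
    rw [sum_bij_ind (fun σ => ∑ τ : Fin n → Fin n,
      (if Function.Bijective τ then (∏ i, M (σ i) (τ i)) else 0))]
    exact Finset.sum_congr rfl fun s _ => sum_bij_ind _
  have h3 : ∀ s : Equiv.Perm (Fin n),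
      (∑ t : Equiv.Perm (Fin n), ∏ i, M (s i) (t i)) = perm M := by
    intro s
    have e1 : ∀ t : Equiv.Perm (Fin n),
        (∏ i, M (s i) (t i)) = ∏ j, M j (((Equiv.mulRight s⁻¹) t) j) := by
      intro t
      rw [← Equiv.prod_comp s (fun j => M j (((Equiv.mulRight s⁻¹) t) j))]
      refine Finset.prod_congr rfl fun i _ => ?_
      simp [Equiv.Perm.mul_apply]
    simp_rw [e1]
    rw [Equiv.sum_comp (Equiv.mulRight s⁻¹) (fun u : Equiv.Perm (Fin n) => ∏ j, M j (u j))]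
    rfl
  rw [h2]
  simp_rw [h3]
  rw [Finset.sum_const, Finset.card_univ, Fintype.card_perm, nsmul_eq_mul]
  have : (n.factorial : ℂ) ≠ 0 := Nat.cast_ne_zero.mpr n.factorial_ne_zero
  field_simp
  rw [Fintype.card_fin]
end

section
/- If A, B ∈ ℂ^{n×n} are Hermitian with A ⪰ B ⪰ 0 (Loewner order), then per(A) ≥ per(B). -/
open scoped Matrix

open scoped MatrixOrder ComplexOrder in
lemma psd_exists_herm_sqrt {n : ℕ} (D : Matrix (Fin n) (Fin n) ℂ) (hD : D.PosSemidef) :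
    ∃ X : Matrix (Fin n) (Fin n) ℂ, X.IsHermitian ∧ X * X = D := by
  obtain ⟨X, hX, -, h⟩ :=
        CFC.exists_sqrt_of_isSelfAdjoint_of_quasispectrumRestricts hD.isHermitian
          (QuasispectrumRestricts.nnreal_of_nonneg hD.nonneg)
  exact ⟨X, hX, h⟩

open ComplexOrder in
/-- The mixed double sum over permutations of products of entries of PSD matrices is
nonnegative. -/
lemma perm_key_nonneg {n : ℕ} (D : Fin n → Matrix (Fin n) (Fin n) ℂ)
    (hD : ∀ i, (D i).PosSemidef) :
    0 ≤ ∑ σ : Equiv.Perm (Fin n), ∑ τ : Equiv.Perm (Fin n), ∏ i, D i (σ i) (τ i) := by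
  classical
  set C : Fin n → Matrix (Fin n) (Fin n) ℂ := fun i => Classical.choose (psd_exists_herm_sqrt (D i) (hD i)) with hCdef
  have hentry : ∀ i a b, D i a b = ∑ k, (starRingEnd ℂ) (C i k a) * C i k b := by
    intro i a b
    have h1 : C i * C i = D i := (Classical.choose_spec (psd_exists_herm_sqrt (D i) (hD i))).2
    have h2 : (C i).IsHermitian := (Classical.choose_spec (psd_exists_herm_sqrt (D i) (hD i))).1
    calc D i a b = ∑ k, C i a k * C i k b := by rw [← h1, Matrix.mul_apply]
      _ = ∑ k, (starRingEnd ℂ) (C i k a) * C i k b := by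
          refine Finset.sum_congr rfl fun k _ => ?_
          rw [show (starRingEnd ℂ) (C i k a) = star (C i k a) from rfl, h2.apply]
  have hmain : ∑ σ : Equiv.Perm (Fin n), ∑ τ : Equiv.Perm (Fin n), ∏ i, D i (σ i) (τ i)
      = ∑ h : Fin n → Fin n,
          (starRingEnd ℂ) (∑ σ : Equiv.Perm (Fin n), ∏ i, C i (h i) (σ i)) *
            (∑ τ : Equiv.Perm (Fin n), ∏ i, C i (h i) (τ i)) := by
    have step1 : ∀ (σ τ : Equiv.Perm (Fin n)),
        ∏ i, D i (σ i) (τ i)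
          = ∑ h : Fin n → Fin n,
              ∏ i, ((starRingEnd ℂ) (C i (h i) (σ i)) * C i (h i) (τ i)) := by
      intro σ τ
      calc ∏ i, D i (σ i) (τ i)
          = ∏ i, ∑ k, (starRingEnd ℂ) (C i k (σ i)) * C i k (τ i) := by
            exact Finset.prod_congr rfl fun i _ => hentry i (σ i) (τ i)
        _ = ∑ h ∈ Fintype.piFinset (fun _ : Fin n => (Finset.univ : Finset (Fin n))),
              ∏ i, ((starRingEnd ℂ) (C i (h i) (σ i)) * C i (h i) (τ i)) := by
            rw [Finset.prod_univ_sum]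
        _ = _ := by rw [Fintype.piFinset_univ]
    calc ∑ σ : Equiv.Perm (Fin n), ∑ τ : Equiv.Perm (Fin n), ∏ i, D i (σ i) (τ i)
        = ∑ σ : Equiv.Perm (Fin n), ∑ τ : Equiv.Perm (Fin n), ∑ h : Fin n → Fin n,
            ∏ i, ((starRingEnd ℂ) (C i (h i) (σ i)) * C i (h i) (τ i)) := by
          exact Finset.sum_congr rfl fun σ _ => Finset.sum_congr rfl fun τ _ => step1 σ τ
      _ = ∑ h : Fin n → Fin n, ∑ σ : Equiv.Perm (Fin n), ∑ τ : Equiv.Perm (Fin n),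
            ∏ i, ((starRingEnd ℂ) (C i (h i) (σ i)) * C i (h i) (τ i)) := by
          exact (Finset.sum_congr rfl fun σ _ => Finset.sum_comm).trans Finset.sum_comm
      _ = ∑ h : Fin n → Fin n, ∑ σ : Equiv.Perm (Fin n), ∑ τ : Equiv.Perm (Fin n),
            ((∏ i, (starRingEnd ℂ) (C i (h i) (σ i))) * ∏ i, C i (h i) (τ i)) := by
          refine Finset.sum_congr rfl fun h _ => Finset.sum_congr rfl fun σ _ =>
            Finset.sum_congr rfl fun τ _ => ?_
          rw [Finset.prod_mul_distrib]
      _ = ∑ h : Fin n → Fin n,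
            ((∑ σ : Equiv.Perm (Fin n), ∏ i, (starRingEnd ℂ) (C i (h i) (σ i))) *
              (∑ τ : Equiv.Perm (Fin n), ∏ i, C i (h i) (τ i))) := by
          refine Finset.sum_congr rfl fun h _ => ?_
          rw [Finset.sum_mul_sum]
      _ = _ := by
          refine Finset.sum_congr rfl fun h _ => ?_
          congr 1
          rw [map_sum]
          exact Finset.sum_congr rfl fun σ _ => (map_prod _ _ _).symm
  rw [hmain]
  exact Finset.sum_nonneg fun h _ => star_mul_self_nonneg _

lemma perm_sum_sum_eq {n : ℕ} (M : Matrix (Fin n) (Fin n) ℂ) :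
    ∑ σ : Equiv.Perm (Fin n), ∑ τ : Equiv.Perm (Fin n), ∏ i, M (σ i) (τ i)
      = (Fintype.card (Equiv.Perm (Fin n)) : ℂ) * perm M := by
  have h : ∀ σ : Equiv.Perm (Fin n),
      ∑ τ : Equiv.Perm (Fin n), ∏ i, M (σ i) (τ i) = perm M := by
    intro σ
    rw [perm, ← Equiv.sum_comp (Equiv.mulRight σ)
      (fun τ : Equiv.Perm (Fin n) => ∏ i, M (σ i) (τ i))]
    refine Finset.sum_congr rfl fun π _ => ?_
    have : ∀ i, M (σ i) ((Equiv.mulRight σ π) i) = M (σ i) (π (σ i)) := fun i => rfl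
    simp only [this]
    exact Equiv.prod_comp σ (fun j => M j (π j))
  rw [Finset.sum_congr rfl fun σ _ => h σ, Finset.sum_const, Finset.card_univ,
    nsmul_eq_mul]

open ComplexOrder in
theorem perm_monotone (n : ℕ) (A B : Matrix (Fin n) (Fin n) ℂ)
    (hB : B.PosSemidef) (hAB : (A - B).PosSemidef) :
    perm B ≤ perm A := by
  classical
  have hk : (0 : ℝ) < (Fintype.card (Equiv.Perm (Fin n)) : ℝ) := by
    exact_mod_cast (Fintype.card_pos : 0 < Fintype.card (Equiv.Perm (Fin n)))
  have key : (Fintype.card (Equiv.Perm (Fin n)) : ℂ) * perm B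
      ≤ (Fintype.card (Equiv.Perm (Fin n)) : ℂ) * perm A := by
    rw [← perm_sum_sum_eq, ← perm_sum_sum_eq]
    -- expand A = (A - B) + B entrywise
    have hent : ∀ a b, A a b = (A - B) a b + B a b := by
      intro a b; simp [Matrix.sub_apply]
    have expand : (∑ σ : Equiv.Perm (Fin n), ∑ τ : Equiv.Perm (Fin n), ∏ i, A (σ i) (τ i))
        = ∑ t ∈ (Finset.univ : Finset (Fin n)).powerset,
            ∑ σ : Equiv.Perm (Fin n), ∑ τ : Equiv.Perm (Fin n),
              ∏ i, (if i ∈ t then A - B else B) (σ i) (τ i) := by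
      have h1 : ∀ (σ τ : Equiv.Perm (Fin n)),
          ∏ i, A (σ i) (τ i)
            = ∑ t ∈ (Finset.univ : Finset (Fin n)).powerset,
                ∏ i, (if i ∈ t then A - B else B) (σ i) (τ i) := by
        intro σ τ
        calc ∏ i, A (σ i) (τ i)
            = ∏ i, ((A - B) (σ i) (τ i) + B (σ i) (τ i)) := by
              exact Finset.prod_congr rfl fun i _ => hent (σ i) (τ i)
          _ = ∑ t ∈ (Finset.univ : Finset (Fin n)).powerset,
                (∏ i ∈ t, (A - B) (σ i) (τ i)) *
                  ∏ i ∈ Finset.univ \ t, B (σ i) (τ i) := by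
              rw [Finset.prod_add]
          _ = _ := by
              refine Finset.sum_congr rfl fun t ht => Eq.symm ?_
              calc ∏ i, (if i ∈ t then A - B else B) (σ i) (τ i)
                  = (∏ i ∈ Finset.univ \ t, (if i ∈ t then A - B else B) (σ i) (τ i)) *
                      ∏ i ∈ t, (if i ∈ t then A - B else B) (σ i) (τ i) :=
                    (Finset.prod_sdiff (Finset.mem_powerset.mp ht)).symm
                _ = _ := by
                    rw [mul_comm]
                    congr 1
                    · exact Finset.prod_congr rfl fun i hi => by rw [if_pos hi]
                    · exact Finset.prod_congr rfl fun i hi => by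
                        rw [if_neg (Finset.mem_sdiff.mp hi).2]
      calc (∑ σ : Equiv.Perm (Fin n), ∑ τ : Equiv.Perm (Fin n), ∏ i, A (σ i) (τ i))
          = ∑ σ : Equiv.Perm (Fin n), ∑ τ : Equiv.Perm (Fin n),
              ∑ t ∈ (Finset.univ : Finset (Fin n)).powerset,
                ∏ i, (if i ∈ t then A - B else B) (σ i) (τ i) := by
            exact Finset.sum_congr rfl fun σ _ => Finset.sum_congr rfl fun τ _ => h1 σ τ
        _ = _ := by
            exact (Finset.sum_congr rfl fun σ _ => Finset.sum_comm).trans Finset.sum_comm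
    rw [expand]
    have hzero : (∑ σ : Equiv.Perm (Fin n), ∑ τ : Equiv.Perm (Fin n), ∏ i, B (σ i) (τ i))
        = ∑ σ : Equiv.Perm (Fin n), ∑ τ : Equiv.Perm (Fin n),
            ∏ i, (if i ∈ (∅ : Finset (Fin n)) then A - B else B) (σ i) (τ i) := by
      refine Finset.sum_congr rfl fun σ _ => Finset.sum_congr rfl fun τ _ =>
        Finset.prod_congr rfl fun i _ => ?_
      rw [if_neg (Finset.notMem_empty i)]
    rw [hzero]
    refine Finset.single_le_sum (f := fun t =>
      ∑ σ : Equiv.Perm (Fin n), ∑ τ : Equiv.Perm (Fin n),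
        ∏ i, (if i ∈ t then A - B else B) (σ i) (τ i)) ?_ ?_
    · intro t _
      refine perm_key_nonneg (fun i => if i ∈ t then A - B else B) fun i => ?_
      by_cases hi : i ∈ t
      · simpa [hi] using hAB
      · simpa [hi] using hB
    · exact Finset.empty_mem_powerset _
  rw [Complex.le_def] at key ⊢
  simp only [Complex.mul_re, Complex.mul_im, Complex.natCast_re, Complex.natCast_im,
    zero_mul, mul_zero, sub_zero, add_zero, zero_add] at key
  exact ⟨le_of_mul_le_mul_left key.1 hk, mul_left_cancel₀ hk.ne' key.2⟩
end

section
/- For any Hermitian positive semidefinite matrix A ∈ ℂ^{n×n}, per(A) ≥ 0 (in particular per(A) is real). -/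
open scoped Matrix

/-- Precomposition with a permutation, as an equivalence on functions `Fin n → Fin n`. -/
def compEquiv {n : ℕ} (τ : Equiv.Perm (Fin n)) : (Fin n → Fin n) ≃ (Fin n → Fin n) :=
  ⟨fun f => f ∘ ⇑τ, fun f => f ∘ ⇑τ⁻¹,
    fun f => by funext i; simp, fun f => by funext i; simp⟩

open ComplexOrder in
theorem perm_nonneg (n : ℕ) (A : Matrix (Fin n) (Fin n) ℂ) (hA : A.PosSemidef) :
    0 ≤ perm A := by
  obtain ⟨C, rfl⟩ : ∃ C : Matrix (Fin n) (Fin n) ℂ, A = Cᴴ * C := by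
    open scoped MatrixOrder in
    exact CStarAlgebra.nonneg_iff_eq_star_mul_self.mp hA.nonneg
  set t : (Fin n → Fin n) → ℂ := fun f => ∏ i, C (f i) i with ht
  have key : perm (Cᴴ * C) = ∑ f : Fin n → Fin n, ∑ σ : Equiv.Perm (Fin n),
      star (t f) * t (f ∘ ⇑σ) := by
    have h1 : ∀ σ : Equiv.Perm (Fin n), (∏ i, (Cᴴ * C) i (σ i))
        = ∑ f : Fin n → Fin n, star (t f) * t (f ∘ ⇑σ⁻¹) := by
      intro σ
      calc ∏ i, (Cᴴ * C) i (σ i) = ∏ i, ∑ k, star (C k i) * C k (σ i) := by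
            simp [Matrix.mul_apply, Matrix.conjTranspose_apply]
        _ = ∑ f ∈ Fintype.piFinset (fun _ : Fin n => (Finset.univ : Finset (Fin n))),
              ∏ i, star (C (f i) i) * C (f i) (σ i) := Finset.prod_univ_sum _ _
        _ = ∑ f : Fin n → Fin n, star (t f) * t (f ∘ ⇑σ⁻¹) := by
            rw [Fintype.piFinset_univ]
            refine Finset.sum_congr rfl fun f _ => ?_
            rw [Finset.prod_mul_distrib]
            congr 1
            · rw [ht]; simp
            · rw [ht]
              calc ∏ i, C (f i) (σ i)
                  = ∏ i, C ((f ∘ ⇑σ⁻¹) (σ i)) (σ i) := by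
                    refine Finset.prod_congr rfl fun i _ => ?_
                    simp
                _ = ∏ i, C ((f ∘ ⇑σ⁻¹) i) i :=
                    Equiv.prod_comp σ (fun j => C ((f ∘ ⇑σ⁻¹) j) j)
    unfold perm
    rw [Finset.sum_congr rfl fun σ _ => h1 σ, Finset.sum_comm]
    refine Finset.sum_congr rfl fun f _ => ?_
    exact Equiv.sum_comp (Equiv.inv (Equiv.Perm (Fin n)))
      (fun σ => star (t f) * t (f ∘ ⇑σ))
  set S : ℂ := ∑ f : Fin n → Fin n, ∑ σ : Equiv.Perm (Fin n),
      star (t f) * t (f ∘ ⇑σ) with hS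
  have hτ : ∀ τ : Equiv.Perm (Fin n),
      (∑ f : Fin n → Fin n, ∑ σ : Equiv.Perm (Fin n),
        star (t (f ∘ ⇑τ)) * t (f ∘ ⇑σ)) = S := by
    intro τ
    calc ∑ f : Fin n → Fin n, ∑ σ : Equiv.Perm (Fin n),
          star (t (f ∘ ⇑τ)) * t (f ∘ ⇑σ)
        = ∑ f : Fin n → Fin n, ∑ σ : Equiv.Perm (Fin n),
            star (t ((compEquiv τ) f)) * t (((compEquiv τ) f) ∘ ⇑τ⁻¹ ∘ ⇑σ) := by
          refine Finset.sum_congr rfl fun f _ => Finset.sum_congr rfl fun σ _ => ?_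
          exact congrArg (star (t (f ∘ ⇑τ)) * t ·) (funext fun i => by simp [compEquiv])
      _ = ∑ g : Fin n → Fin n, ∑ σ : Equiv.Perm (Fin n),
            star (t g) * t (g ∘ ⇑τ⁻¹ ∘ ⇑σ) :=
          Equiv.sum_comp (compEquiv τ)
            (fun g => ∑ σ : Equiv.Perm (Fin n), star (t g) * t (g ∘ ⇑τ⁻¹ ∘ ⇑σ))
      _ = S := by
          rw [hS]
          refine Finset.sum_congr rfl fun g _ => ?_
          rw [← Equiv.sum_comp (Equiv.mulLeft τ)
            (fun σ => star (t g) * t (g ∘ ⇑τ⁻¹ ∘ ⇑σ))]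
          refine Finset.sum_congr rfl fun σ _ => ?_
          exact congrArg (star (t g) * t ·) (funext fun i => by simp)
  have hsum : (∑ f : Fin n → Fin n,
      star (∑ τ : Equiv.Perm (Fin n), t (f ∘ ⇑τ)) *
        ∑ σ : Equiv.Perm (Fin n), t (f ∘ ⇑σ)) = (n.factorial : ℂ) * S := by
    calc ∑ f : Fin n → Fin n,
          star (∑ τ : Equiv.Perm (Fin n), t (f ∘ ⇑τ)) *
            ∑ σ : Equiv.Perm (Fin n), t (f ∘ ⇑σ)
        = ∑ f : Fin n → Fin n, ∑ τ : Equiv.Perm (Fin n), ∑ σ : Equiv.Perm (Fin n),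
            star (t (f ∘ ⇑τ)) * t (f ∘ ⇑σ) := by
          refine Finset.sum_congr rfl fun f _ => ?_
          rw [star_sum, Finset.sum_mul]
          exact Finset.sum_congr rfl fun τ _ => Finset.mul_sum _ _ _
      _ = ∑ τ : Equiv.Perm (Fin n), ∑ f : Fin n → Fin n, ∑ σ : Equiv.Perm (Fin n),
            star (t (f ∘ ⇑τ)) * t (f ∘ ⇑σ) := Finset.sum_comm
      _ = ∑ _τ : Equiv.Perm (Fin n), S := Finset.sum_congr rfl fun τ _ => hτ τ
      _ = (n.factorial : ℂ) * S := by
          rw [Finset.sum_const, Finset.card_univ, Fintype.card_perm, Fintype.card_fin, nsmul_eq_mul]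
  have hnn : 0 ≤ (n.factorial : ℂ) * S := by
    rw [← hsum]
    exact Finset.sum_nonneg fun f _ => star_mul_self_nonneg _
  have hpos : (0 : ℂ) < (n.factorial : ℂ) := by
    exact_mod_cast Nat.factorial_pos n
  have hfac : ((n.factorial : ℂ)) ≠ 0 := ne_of_gt hpos
  have hinv : 0 ≤ ((n.factorial : ℂ))⁻¹ := by
    rw [← Complex.ofReal_natCast, ← Complex.ofReal_inv]
    exact Complex.zero_le_real.mpr (by positivity)
  have : S = ((n.factorial : ℂ))⁻¹ * ((n.factorial : ℂ) * S) := by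
    rw [← mul_assoc, inv_mul_cancel₀ hfac, one_mul]
  rw [key, this]
  exact mul_nonneg hinv hnn
end

section
/- Let A ∈ ℂ^{n×n} be Hermitian PSD with A_{ii} > 0 for all i. Then the infimum rel(A) = inf{ Π_i D_{ii} : D diagonal, D ⪰ A } is attained by some diagonal matrix D* ⪰ A. -/
open scoped Matrix ComplexOrder

def relSet {n : ℕ} (A : Matrix (Fin n) (Fin n) ℂ) : Set ℝ :=
  {t | ∃ d : Fin n → ℝ,
    (Matrix.diagonal (fun i => (d i : ℂ)) - A).PosSemidef ∧ ∏ i, d i = t}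

namespace RelAux

open Matrix

variable {n : ℕ}

lemma herm_sub (A : Matrix (Fin n) (Fin n) ℂ) (hA : A.IsHermitian) (d : Fin n → ℝ) :
    (Matrix.diagonal (fun i => (d i : ℂ)) - A).IsHermitian := by
  refine IsHermitian.sub ?_ hA
  exact isHermitian_diagonal_of_self_adjoint _ (funext fun i => Complex.conj_ofReal (d i))

lemma conj_quad (M : Matrix (Fin n) (Fin n) ℂ) (hM : M.IsHermitian) (x : Fin n → ℂ) :
    (starRingEnd ℂ) (star x ⬝ᵥ M *ᵥ x) = star x ⬝ᵥ M *ᵥ x := by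
  have h1 : star (star x ⬝ᵥ M *ᵥ x) = star (M *ᵥ x) ⬝ᵥ x := by
    rw [star_dotProduct, star_star]
  rw [show (starRingEnd ℂ) (star x ⬝ᵥ M *ᵥ x) = star (star x ⬝ᵥ M *ᵥ x) from rfl, h1,
    star_mulVec]
  rw [← dotProduct_mulVec, hM.eq]

lemma psd_iff_re (M : Matrix (Fin n) (Fin n) ℂ) (hM : M.IsHermitian) :
    M.PosSemidef ↔ ∀ x : Fin n → ℂ, 0 ≤ (star x ⬝ᵥ M *ᵥ x).re := by
  constructor
  · intro h x; exact h.re_dotProduct_nonneg x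
  · intro h
    refine posSemidef_iff_dotProduct_mulVec.mpr ⟨hM, fun x => ?_⟩
    have him : (star x ⬝ᵥ M *ᵥ x).im = 0 := by
      have := congrArg Complex.im (conj_quad M hM x)
      simp only [Complex.conj_im] at this
      linarith
    rw [Complex.le_def]
    simpa [him] using h x

lemma quad_eval (A : Matrix (Fin n) (Fin n) ℂ) (d : Fin n → ℝ) (x : Fin n → ℂ) :
    (star x ⬝ᵥ (Matrix.diagonal (fun i => (d i : ℂ)) - A) *ᵥ x).re
      = (∑ i, d i * Complex.normSq (x i)) - (star x ⬝ᵥ A *ᵥ x).re := by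
  rw [sub_mulVec, dotProduct_sub, Complex.sub_re]
  congr 1
  rw [dotProduct, Complex.re_sum]
  refine Finset.sum_congr rfl fun i _ => ?_
  simp only [mulVec_diagonal, Pi.star_apply]
  have : (starRingEnd ℂ) (x i) * ((d i : ℂ) * x i) = ((d i * Complex.normSq (x i) : ℝ) : ℂ) := by
    push_cast
    rw [mul_comm ((starRingEnd ℂ) (x i)), mul_assoc, Complex.mul_conj]
  rw [show star (x i) = (starRingEnd ℂ) (x i) from rfl, this, Complex.ofReal_re]

lemma exists_const_feasible (A : Matrix (Fin n) (Fin n) ℂ) (hA : A.PosSemidef) :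
    ∃ c : ℝ, 0 ≤ c ∧ (Matrix.diagonal (fun _ : Fin n => (c : ℂ)) - A).PosSemidef := by
  classical
  set lam := hA.1.eigenvalues with hlam
  set U : Matrix (Fin n) (Fin n) ℂ := (Matrix.IsHermitian.eigenvectorUnitary hA.1 : Matrix (Fin n) (Fin n) ℂ)
  set c : ℝ := ∑ i, lam i with hc
  have hnn : ∀ i, 0 ≤ lam i := hA.eigenvalues_nonneg
  have hle : ∀ i, lam i ≤ c := fun i =>
    Finset.single_le_sum (fun j _ => hnn j) (Finset.mem_univ i)
  refine ⟨c, Finset.sum_nonneg fun i _ => hnn i, ?_⟩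
  have hUU : U * star U = 1 :=
    (Matrix.mem_unitaryGroup_iff).mp (Matrix.IsHermitian.eigenvectorUnitary hA.1).2
  have key : Matrix.diagonal (fun _ : Fin n => (c : ℂ)) - A
      = U * Matrix.diagonal (fun i => ((c - lam i : ℝ) : ℂ)) * star U := by
    have h1 : Matrix.diagonal (fun _ : Fin n => (c : ℂ)) = (c : ℂ) • (1 : Matrix (Fin n) (Fin n) ℂ) := by
      ext i j
      by_cases h : i = j <;> simp [Matrix.diagonal_apply, Matrix.one_apply, h]
    have h2 : U * Matrix.diagonal (fun _ : Fin n => (c : ℂ)) * star U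
        = Matrix.diagonal (fun _ : Fin n => (c : ℂ)) := by
      rw [h1, Matrix.mul_smul, Matrix.smul_mul, Matrix.mul_one, hUU]
    have h3 := hA.1.spectral_theorem
    calc Matrix.diagonal (fun _ : Fin n => (c : ℂ)) - A
        = U * Matrix.diagonal (fun _ : Fin n => (c : ℂ)) * star U
          - U * Matrix.diagonal (RCLike.ofReal ∘ lam) * star U := by rw [h2, h3, Unitary.conjStarAlgAut_apply]
      _ = U * (Matrix.diagonal (fun _ : Fin n => (c : ℂ)) - Matrix.diagonal (RCLike.ofReal ∘ lam)) * star U := by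
          rw [Matrix.mul_sub, Matrix.sub_mul]
      _ = U * Matrix.diagonal (fun i => ((c - lam i : ℝ) : ℂ)) * star U := by
          rw [Matrix.diagonal_sub]
          congr 2
          funext i
          simp [Pi.sub_apply, Function.comp]
  rw [key, Matrix.star_eq_conjTranspose]
  refine Matrix.PosSemidef.mul_mul_conjTranspose_same ?_ U
  refine Matrix.PosSemidef.diagonal fun i => ?_
  simp only [Pi.zero_apply]
  rw [Complex.zero_le_real]
  linarith [hle i]

end RelAux

open Matrix RelAux in
theorem rel_attained (n : ℕ) (A : Matrix (Fin n) (Fin n) ℂ) (hA : A.PosSemidef)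
    (hdiag : ∀ i, 0 < (A i i).re) :
    ∃ d : Fin n → ℝ, (Matrix.diagonal (fun i => (d i : ℂ)) - A).PosSemidef ∧
      ∏ i, d i = sInf (relSet A) := by
  classical
  set a : Fin n → ℝ := fun i => (A i i).re with ha
  have hapos : ∀ i, 0 < a i := hdiag
  have entry : ∀ d : Fin n → ℝ,
      (Matrix.diagonal (fun i => (d i : ℂ)) - A).PosSemidef → ∀ i, a i ≤ d i := by
    intro d hd i
    have h0 : 0 ≤ (star (Pi.single i 1 : Fin n → ℂ) ⬝ᵥ
        ((Matrix.diagonal fun j => (d j : ℂ)) - A) *ᵥ Pi.single i 1).re :=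
      hd.re_dotProduct_nonneg (Pi.single i 1)
    rw [quad_eval] at h0
    have h1 : ∑ j, d j * Complex.normSq ((Pi.single i 1 : Fin n → ℂ) j) = d i := by
      rw [Finset.sum_eq_single i]
      · simp
      · intro j _ hj; simp [Pi.single_apply, hj]
      · intro h; exact absurd (Finset.mem_univ i) h
    have h2 : (star (Pi.single i 1 : Fin n → ℂ) ⬝ᵥ A *ᵥ Pi.single i 1).re = a i := by
      have h3 : star (Pi.single i 1 : Fin n → ℂ) ⬝ᵥ A *ᵥ (Pi.single i 1) = A i i := by
        simp [dotProduct, mulVec, Pi.single_apply]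
      rw [h3]
    rw [h1, h2] at h0
    linarith
  obtain ⟨c, hc0, hcfeas⟩ := exists_const_feasible A hA
  set t0 : ℝ := c ^ n with ht0def
  have hprodc : (∏ _i : Fin n, c) = t0 := by
    simp [ht0def, Finset.prod_const]
  have ht0 : t0 ∈ relSet A := ⟨fun _ => c, hcfeas, hprodc⟩
  set C : Set (Fin n → ℝ) := {d | (Matrix.diagonal (fun i => (d i : ℂ)) - A).PosSemidef} with hC
  have hCc : IsClosed C := by
    have hCeq : C = ⋂ x : Fin n → ℂ,
        {d : Fin n → ℝ | (star x ⬝ᵥ A *ᵥ x).re ≤ ∑ i, d i * Complex.normSq (x i)} := by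
      ext d
      simp only [Set.mem_iInter, Set.mem_setOf_eq, hC]
      rw [psd_iff_re _ (herm_sub A hA.1 d)]
      constructor
      · intro h x; have := h x; rw [quad_eval] at this; linarith
      · intro h x; rw [quad_eval]; have := h x; linarith
    rw [hCeq]
    refine isClosed_iInter fun x => isClosed_le continuous_const ?_
    exact continuous_finset_sum _ fun i _ => (continuous_apply i).mul continuous_const
  have prodCont : Continuous fun d : Fin n → ℝ => ∏ i, d i :=
    continuous_finset_prod _ fun i _ => continuous_apply i
  set K : Set (Fin n → ℝ) := C ∩ {d | ∏ i, d i ≤ t0} with hK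
  have hKclosed : IsClosed K := hCc.inter (isClosed_le prodCont continuous_const)
  have haprod : ∀ i : Fin n, 0 < ∏ j ∈ Finset.univ.erase i, a j :=
    fun i => Finset.prod_pos fun j _ => hapos j
  have hKsub : K ⊆ Set.pi Set.univ
      fun i => Set.Icc (a i) (t0 / ∏ j ∈ Finset.univ.erase i, a j) := by
    intro d hd i _
    have h1 : ∀ j, a j ≤ d j := entry d hd.1
    refine ⟨h1 i, ?_⟩
    rw [le_div_iff₀ (haprod i)]
    calc d i * ∏ j ∈ Finset.univ.erase i, a j
        ≤ d i * ∏ j ∈ Finset.univ.erase i, d j := by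
          refine mul_le_mul_of_nonneg_left
            (Finset.prod_le_prod (fun j _ => (hapos j).le) (fun j _ => h1 j))
            ((hapos i).le.trans (h1 i))
      _ = ∏ j, d j := Finset.mul_prod_erase _ _ (Finset.mem_univ i)
      _ ≤ t0 := hd.2
  have hKcomp : IsCompact K :=
    IsCompact.of_isClosed_subset (isCompact_univ_pi fun i => isCompact_Icc) hKclosed hKsub
  have hd0K : (fun _ : Fin n => c) ∈ K := ⟨hcfeas, le_of_eq hprodc⟩
  obtain ⟨dstar, hdK, hmin⟩ := hKcomp.exists_isMinOn ⟨_, hd0K⟩ prodCont.continuousOn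
  refine ⟨dstar, hdK.1, ?_⟩
  have hSne : (relSet A).Nonempty := ⟨t0, ht0⟩
  have hbdd : BddBelow (relSet A) := by
    refine ⟨0, fun t ht => ?_⟩
    obtain ⟨d, hdf, rfl⟩ := ht
    exact Finset.prod_nonneg fun i _ => (hapos i).le.trans (entry d hdf i)
  refine le_antisymm (le_csInf hSne ?_) (csInf_le hbdd ⟨dstar, hdK.1, rfl⟩)
  rintro t ⟨d, hdf, rfl⟩
  by_cases hle : ∏ i, d i ≤ t0
  · exact isMinOn_iff.mp hmin d ⟨hdf, hle⟩
  · have h1 : ∏ i, dstar i ≤ t0 := hdK.2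
    linarith [not_le.mp hle]
end

section
/- Let A ∈ ℂ^{n×n} be Hermitian PSD such that the identity I minimizes per(D) = Π_i D_{ii} over diagonal matrices D ⪰ A. Then there exists a Hermitian PSD matrix B ∈ ℂ^{n×n} with B_{ii} = 1 for all i (a correlation matrix) such that AB = B. -/
open scoped Matrix ComplexOrder
open Matrix Filter Topology Finset

namespace CorrCertAux

variable {n : ℕ}

lemma herm_quad_real {M : Matrix (Fin n) (Fin n) ℂ} (hM : M.IsHermitian) (x : Fin n → ℂ) :
    (star x ⬝ᵥ M *ᵥ x).im = 0 := by
  have h : star (star x ⬝ᵥ M *ᵥ x) = star x ⬝ᵥ M *ᵥ x := by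
    calc star (star x ⬝ᵥ M *ᵥ x) = star (M *ᵥ x) ⬝ᵥ star (star x) := by
          rw [star_dotProduct_star]
      _ = (star x ᵥ* Mᴴ) ⬝ᵥ x := by rw [star_mulVec, star_star]
      _ = star x ⬝ᵥ M *ᵥ x := by rw [← dotProduct_mulVec, hM.eq]
  have := congrArg Complex.im h
  simp only [Complex.star_def, Complex.conj_im] at this
  linarith

lemma quad_smul (M : Matrix (Fin n) (Fin n) ℂ) (a : ℂ) (x : Fin n → ℂ) :
    star (a • x) ⬝ᵥ M *ᵥ (a • x) = (star a * a) * (star x ⬝ᵥ M *ᵥ x) := by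
  rw [star_smul, smul_dotProduct, mulVec_smul, dotProduct_smul]
  simp [smul_eq_mul]; ring

lemma quad_diagonal (v : Fin n → ℝ) (x : Fin n → ℂ) :
    star x ⬝ᵥ (Matrix.diagonal (fun i => (v i : ℂ))) *ᵥ x
      = ((∑ i, v i * ‖x i‖ ^ 2 : ℝ) : ℂ) := by
  push_cast
  simp only [dotProduct, mulVec_diagonal, Pi.star_apply, Complex.star_def]
  refine Finset.sum_congr rfl fun i _ => ?_
  rw [show (starRingEnd ℂ) (x i) * ((v i : ℂ) * x i)
      = (v i : ℂ) * ((starRingEnd ℂ) (x i) * x i) by ring]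
  rw [Complex.conj_mul']

lemma psd_smul {M : Matrix (Fin n) (Fin n) ℂ} (hM : M.PosSemidef) {a : ℝ} (ha : 0 ≤ a) :
    ((a : ℂ) • M).PosSemidef := by
  rw [Matrix.posSemidef_iff_dotProduct_mulVec]
  constructor
  · unfold Matrix.IsHermitian
    rw [conjTranspose_smul, hM.1.eq]
    congr 1
    simp
  · intro x
    rw [smul_mulVec, dotProduct_smul, smul_eq_mul]
    exact mul_nonneg (by exact_mod_cast ha) (hM.dotProduct_mulVec_nonneg x)

lemma psd_entry_sq_le {B : Matrix (Fin n) (Fin n) ℂ} (hB : B.PosSemidef) (i j : Fin n) :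
    ‖B i j‖ ^ 2 ≤ (B i i).re * (B j j).re := by
  obtain ⟨C, hC⟩ : ∃ C : Matrix (Fin n) (Fin n) ℂ, B = Cᴴ * C := by
    open scoped MatrixOrder in
    exact CStarAlgebra.nonneg_iff_eq_star_mul_self.mp hB.nonneg
  subst hC
  set v : Fin n → EuclideanSpace ℂ (Fin n) := fun i => WithLp.toLp 2 (fun k => C k i) with hv
  have happ : ∀ i j, (Cᴴ * C) i j = inner ℂ (v i) (v j) := by
    intro i j
    simp [Matrix.mul_apply, conjTranspose_apply, EuclideanSpace.inner_eq_star_dotProduct,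
      dotProduct, hv, mul_comm]
  have hii : ((Cᴴ * C) i i).re = ‖v i‖ ^ 2 := by
    rw [happ, inner_self_eq_norm_sq_to_K (𝕜 := ℂ)]; norm_cast
  have hjj : ((Cᴴ * C) j j).re = ‖v j‖ ^ 2 := by
    rw [happ, inner_self_eq_norm_sq_to_K (𝕜 := ℂ)]; norm_cast
  rw [hii, hjj, happ]
  calc ‖(inner ℂ (v i) (v j) : ℂ)‖ ^ 2 ≤ (‖v i‖ * ‖v j‖) ^ 2 := by
        have := norm_inner_le_norm (𝕜 := ℂ) (v i) (v j)
        exact pow_le_pow_left₀ (norm_nonneg _) this 2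
    _ = ‖v i‖ ^ 2 * ‖v j‖ ^ 2 := by ring

lemma isClosed_nonneg : IsClosed {z : ℂ | 0 ≤ z} := by
  have : {z : ℂ | 0 ≤ z} = Complex.re ⁻¹' Set.Ici 0 ∩ Complex.im ⁻¹' {0} := by
    ext z
    simp [Complex.le_def, eq_comm]
  rw [this]
  exact (isClosed_Ici.preimage Complex.continuous_re).inter
    (isClosed_singleton.preimage Complex.continuous_im)

lemma isClosed_psd : IsClosed {B : Matrix (Fin n) (Fin n) ℂ | B.PosSemidef} := by
  have : {B : Matrix (Fin n) (Fin n) ℂ | B.PosSemidef}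
      = {B : Matrix (Fin n) (Fin n) ℂ | Bᴴ = B}
        ∩ ⋂ x : Fin n → ℂ, {B | 0 ≤ star x ⬝ᵥ B *ᵥ x} := by
    ext B
    simp [Matrix.posSemidef_iff_dotProduct_mulVec, Matrix.IsHermitian, Set.mem_iInter]
  rw [this]
  refine IsClosed.inter (isClosed_eq ?_ continuous_id) (isClosed_iInter fun x => ?_)
  · exact continuous_id.matrix_conjTranspose
  · exact isClosed_nonneg.preimage
      (continuous_const.dotProduct (continuous_id.matrix_mulVec continuous_const))

lemma isCompact_entries : IsCompact {M : Matrix (Fin n) (Fin n) ℂ | ∀ i j, ‖M i j‖ ≤ 2} := by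
  have : {M : Matrix (Fin n) (Fin n) ℂ | ∀ i j, ‖M i j‖ ≤ 2}
      = Set.pi Set.univ (fun _ : Fin n =>
          Set.pi Set.univ fun _ : Fin n => Metric.closedBall (0 : ℂ) 2) := by
    ext M
    constructor
    · intro h i _ j _
      simpa [Metric.mem_closedBall, dist_zero_right] using h i j
    · intro h i j
      simpa [Metric.mem_closedBall, dist_zero_right] using h i (Set.mem_univ i) j (Set.mem_univ j)
  rw [this]
  exact isCompact_univ_pi fun _ => isCompact_univ_pi fun _ => isCompact_closedBall _ _

lemma eventually_prod_lt (c : Fin n → ℝ) (hc : ∑ i, c i < 0) :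
    ∀ᶠ t in 𝓝[>] (0 : ℝ), ∏ i, (1 + t * c i) < 1 := by
  have hd : HasDerivAt (fun t : ℝ => ∏ i, (1 + t * c i)) (∑ i, c i) 0 := by
    have h := HasDerivAt.finset_prod (u := Finset.univ) (f := fun i t => 1 + t * c i)
      (f' := c) (x := 0) (fun i _ => by
        simpa using ((hasDerivAt_id (0 : ℝ)).mul_const (c i)).const_add 1)
    simpa [Finset.prod_fn] using h
  rw [hasDerivAt_iff_tendsto_slope] at hd
  have h2 : ∀ᶠ t in 𝓝[≠] (0 : ℝ), slope (fun t : ℝ => ∏ i, (1 + t * c i)) 0 t < 0 :=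
    hd.eventually_lt_const hc
  have h3 : ∀ᶠ t in 𝓝[>] (0 : ℝ), slope (fun t : ℝ => ∏ i, (1 + t * c i)) 0 t < 0 :=
    nhdsWithin_mono 0 (fun t (ht : t ∈ Set.Ioi 0) => ne_of_gt ht) h2
  filter_upwards [h3, self_mem_nhdsWithin] with t hslope (ht : 0 < t)
  rw [slope_def_field] at hslope
  simp only [zero_mul, add_zero, Finset.prod_const_one, sub_zero] at hslope
  rcases (div_neg_iff).mp hslope with ⟨h, h'⟩ | ⟨h, h'⟩
  · linarith
  · linarith

lemma quad_single {B : Matrix (Fin n) (Fin n) ℂ} (i : Fin n) :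
    star (Pi.single i 1 : Fin n → ℂ) ⬝ᵥ B *ᵥ Pi.single i 1 = B i i := by
  have hs : star (Pi.single i 1 : Fin n → ℂ) = Pi.single i 1 := by
    funext k
    by_cases h : k = i <;> simp [Pi.single_apply, h]
  rw [hs, mulVec_single, single_dotProduct]
  simp

lemma psd_diag_nonneg {B : Matrix (Fin n) (Fin n) ℂ} (hB : B.PosSemidef) (i : Fin n) :
    0 ≤ (B i i).re ∧ (B i i).im = 0 := by
  have h := hB.dotProduct_mulVec_nonneg (Pi.single i 1)
  rw [quad_single] at h
  rw [Complex.le_def] at h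
  exact ⟨by simpa using h.1, (h.2).symm⟩

lemma exists_B_of_mem_closure (A : Matrix (Fin n) (Fin n) ℂ)
    (h1 : (fun _ => (1:ℝ)) ∈ closure {d : Fin n → ℝ | ∃ B : Matrix (Fin n) (Fin n) ℂ,
        B.PosSemidef ∧ ((1 : Matrix (Fin n) (Fin n) ℂ) - A) * B = 0 ∧ ∀ i, (B i i).re = d i}) :
    ∃ B : Matrix (Fin n) (Fin n) ℂ,
      B.PosSemidef ∧ ((1 : Matrix (Fin n) (Fin n) ℂ) - A) * B = 0 ∧ ∀ i, B i i = 1 := by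
  haveI : FirstCountableTopology (Matrix (Fin n) (Fin n) ℂ) :=
    inferInstanceAs (FirstCountableTopology (Fin n → Fin n → ℂ))
  obtain ⟨d, hdD, hdlim⟩ := mem_closure_iff_seq_limit.mp h1
  choose B hBpsd hBmul hBdiag using hdD
  have hev : ∀ᶠ k in atTop, ∀ i, d k i ≤ 2 := by
    rw [Filter.eventually_all]
    intro i
    have hti : Tendsto (fun k => d k i) atTop (𝓝 1) :=
      ((continuous_apply i).tendsto _).comp hdlim
    exact hti.eventually_le_const (by norm_num)
  rw [eventually_atTop] at hev
  obtain ⟨K, hK⟩ := hev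
  have hmem : ∀ k, B (k + K) ∈ {M : Matrix (Fin n) (Fin n) ℂ | ∀ i j, ‖M i j‖ ≤ 2} := by
    intro k i j
    have h1' := psd_entry_sq_le (hBpsd (k + K)) i j
    have hii : (B (k + K) i i).re ≤ 2 := by
      rw [hBdiag]; exact hK (k + K) (Nat.le_add_left _ _) i
    have hjj : (B (k + K) j j).re ≤ 2 := by
      rw [hBdiag]; exact hK (k + K) (Nat.le_add_left _ _) j
    have hii0 := (psd_diag_nonneg (hBpsd (k + K)) i).1
    have hjj0 := (psd_diag_nonneg (hBpsd (k + K)) j).1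
    nlinarith [norm_nonneg (B (k + K) i j)]
  obtain ⟨B', hBmem, φ, hφ, htend⟩ := isCompact_entries.tendsto_subseq hmem
  refine ⟨B', ?_, ?_, ?_⟩
  · exact isClosed_psd.mem_of_tendsto htend (Filter.Eventually.of_forall fun k => hBpsd _)
  · have hcont : Continuous fun M : Matrix (Fin n) (Fin n) ℂ =>
        ((1 : Matrix (Fin n) (Fin n) ℂ) - A) * M :=
      continuous_const.matrix_mul continuous_id
    have ht2 : Tendsto (fun k => ((1 : Matrix (Fin n) (Fin n) ℂ) - A) * B (φ k + K)) atTop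
        (𝓝 (((1 : Matrix (Fin n) (Fin n) ℂ) - A) * B')) := (hcont.tendsto _).comp htend
    have heq : (fun k => ((1 : Matrix (Fin n) (Fin n) ℂ) - A) * B (φ k + K))
        = fun _ => (0 : Matrix (Fin n) (Fin n) ℂ) := by
      funext k; exact hBmul _
    rw [heq] at ht2
    exact (tendsto_nhds_unique ht2 tendsto_const_nhds)
  · intro i
    have hBr : ∀ k, B (φ k + K) i i = ((d (φ k + K) i : ℝ) : ℂ) := by
      intro k
      have h2 := (psd_diag_nonneg (hBpsd (φ k + K)) i).2
      have h3 := hBdiag (φ k + K) i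
      apply Complex.ext
      · simpa using h3
      · simpa using h2
    have hφK : Tendsto (fun k => φ k + K) atTop atTop :=
      tendsto_atTop_mono (fun k => le_trans hφ.le_apply (Nat.le_add_right _ K)) tendsto_id
    have htd : Tendsto (fun k => d (φ k + K) i) atTop (𝓝 1) :=
      (((continuous_apply i).tendsto _).comp hdlim).comp hφK
    have ht1 : Tendsto (fun k => B (φ k + K) i i) atTop (𝓝 ((1 : ℝ) : ℂ)) := by
      simp_rw [hBr]
      exact (Complex.continuous_ofReal.tendsto _).comp htd
    have hc2 : Continuous fun M : Matrix (Fin n) (Fin n) ℂ => M i i :=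
      (continuous_apply (A := fun _ : Fin n => ℂ) i).comp
        (continuous_apply (A := fun _ : Fin n => Fin n → ℂ) i)
    have ht2 : Tendsto (fun k => B (φ k + K) i i) atTop (𝓝 (B' i i)) :=
      (hc2.tendsto _).comp htend
    have := tendsto_nhds_unique ht1 ht2
    simpa using this.symm

end CorrCertAux

open CorrCertAux

theorem exists_correlation_certificate (n : ℕ) (A : Matrix (Fin n) (Fin n) ℂ)
    (hA : A.PosSemidef)
    (hI : ((1 : Matrix (Fin n) (Fin n) ℂ) - A).PosSemidef)
    (hopt : ∀ d : Fin n → ℝ,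
      (Matrix.diagonal (fun i => (d i : ℂ)) - A).PosSemidef → 1 ≤ ∏ i, d i) :
    ∃ B : Matrix (Fin n) (Fin n) ℂ,
      B.PosSemidef ∧ (∀ i, B i i = 1) ∧ A * B = B := by
  classical
  by_cases hex : ∃ B : Matrix (Fin n) (Fin n) ℂ,
      B.PosSemidef ∧ ((1 : Matrix (Fin n) (Fin n) ℂ) - A) * B = 0 ∧ ∀ i, B i i = 1
  · obtain ⟨B, hB, hmul, hdiag⟩ := hex
    refine ⟨B, hB, hdiag, ?_⟩
    rw [Matrix.sub_mul, Matrix.one_mul] at hmul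
    exact (sub_eq_zero.mp hmul).symm
  · exfalso
    set D : Set (Fin n → ℝ) := {d | ∃ B : Matrix (Fin n) (Fin n) ℂ,
      B.PosSemidef ∧ ((1 : Matrix (Fin n) (Fin n) ℂ) - A) * B = 0 ∧ ∀ i, (B i i).re = d i}
      with hD
    have h0D : (0 : Fin n → ℝ) ∈ D := ⟨0, Matrix.PosSemidef.zero, by simp, by simp⟩
    have hsmulD : ∀ (t : ℝ), 0 ≤ t → ∀ d ∈ D, t • d ∈ D := by
      rintro t ht d ⟨B, hB, hm, hd⟩
      refine ⟨(t : ℂ) • B, psd_smul hB ht, by rw [Matrix.mul_smul, hm, smul_zero], fun i => ?_⟩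
      simp [Matrix.smul_apply, ← hd i, Complex.mul_re]
    have hconv : Convex ℝ D := by
      rintro d1 ⟨B1, h1, m1, e1⟩ d2 ⟨B2, h2, m2, e2⟩ a b ha hb hab
      refine ⟨(a : ℂ) • B1 + (b : ℂ) • B2, (psd_smul h1 ha).add (psd_smul h2 hb), ?_, fun i => ?_⟩
      · rw [Matrix.mul_add, Matrix.mul_smul, Matrix.mul_smul, m1, m2]
        simp
      · simp [Matrix.add_apply, Matrix.smul_apply, ← e1 i, ← e2 i, Complex.mul_re]
    have h1c : (fun _ => (1 : ℝ)) ∉ closure D := fun h => hex (exists_B_of_mem_closure A h)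
    obtain ⟨f, u, hfD, hf1⟩ :=
      geometric_hahn_banach_closed_point hconv.closure isClosed_closure h1c
    have hu : 0 < u := by simpa using hfD 0 (subset_closure h0D)
    have hfle : ∀ d ∈ D, f d ≤ 0 := by
      intro d hd
      by_contra h
      push_neg at h
      have ht : (0 : ℝ) ≤ u / f d := le_of_lt (div_pos hu h)
      have h2 := hfD _ (subset_closure (hsmulD _ ht d hd))
      rw [f.map_smul, smul_eq_mul, div_mul_cancel₀ _ (ne_of_gt h)] at h2
      exact lt_irrefl _ h2
    set c : Fin n → ℝ := fun i => -(f (Pi.single i 1)) with hc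
    have hflin : ∀ d : Fin n → ℝ, f d = -∑ i, d i * c i := by
      intro d
      have hrepr : d = ∑ i, Pi.single i (d i) := (Finset.univ_sum_single d).symm
      calc f d = f (∑ i, Pi.single i (d i)) := by rw [← hrepr]
        _ = ∑ i, f (Pi.single i (d i)) := map_sum f _ _
        _ = ∑ i, d i * f (Pi.single i 1) := by
            refine Finset.sum_congr rfl fun i _ => ?_
            have hsg : Pi.single i (d i) = d i • (Pi.single i (1 : ℝ) : Fin n → ℝ) := by
              funext j
              by_cases hji : j = i
              · subst hji; simp
              · simp [Pi.single_apply, hji]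
            rw [hsg, f.map_smul, smul_eq_mul]
        _ = -∑ i, d i * c i := by
            simp [hc, mul_neg]
    have hcB : ∀ B : Matrix (Fin n) (Fin n) ℂ, B.PosSemidef →
        ((1 : Matrix (Fin n) (Fin n) ℂ) - A) * B = 0 → 0 ≤ ∑ i, c i * (B i i).re := by
      intro B hB hm
      have hd : (fun i => (B i i).re) ∈ D := ⟨B, hB, hm, fun i => rfl⟩
      have := hfle _ hd
      rw [hflin] at this
      have h2 : 0 ≤ ∑ i, (B i i).re * c i := by linarith
      calc (0:ℝ) ≤ ∑ i, (B i i).re * c i := h2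
        _ = ∑ i, c i * (B i i).re := by
            refine Finset.sum_congr rfl fun i _ => mul_comm _ _
    have hsumc : ∑ i, c i < 0 := by
      have h2 := hf1
      rw [hflin] at h2
      simp only [one_mul] at h2
      linarith
    have hn : 0 < n := by
      rcases Nat.eq_zero_or_pos n with h | h
      · subst h
        simp at hsumc
      · exact h
    set ε : ℝ := (-∑ i, c i) / (2 * n) with hε
    have hεpos : 0 < ε := div_pos (by linarith) (by positivity)
    set c' : Fin n → ℝ := fun i => c i + ε with hc'
    have hsum' : ∑ i, c' i < 0 := by
      have hne : (n : ℝ) ≠ 0 := by positivity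
      have : ∑ i, c' i = ∑ i, c i + n * ε := by
        rw [hc']
        rw [Finset.sum_add_distrib, Finset.sum_const, Finset.card_univ, Fintype.card_fin,
          nsmul_eq_mul]
      rw [this, hε]
      have : (n : ℝ) * ((-∑ i, c i) / (2 * n)) = (-∑ i, c i) / 2 := by
        field_simp
      rw [this]
      linarith
    -- kernel estimate
    have hker : ∀ y : Fin n → ℂ, ((1 : Matrix (Fin n) (Fin n) ℂ) - A) *ᵥ y = 0 →
        ε * ∑ i, ‖y i‖ ^ 2 ≤ ∑ i, c' i * ‖y i‖ ^ 2 := by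
      intro y hy
      set B : Matrix (Fin n) (Fin n) ℂ := Matrix.of fun i j => y i * star (y j) with hBdef
      have hBpsd : B.PosSemidef := by
        rw [Matrix.posSemidef_iff_dotProduct_mulVec]
        constructor
        · unfold Matrix.IsHermitian
          ext i j
          simp [hBdef, conjTranspose_apply, mul_comm]
        · intro x
          have hBv : B *ᵥ x = fun i => y i * (star y ⬝ᵥ x) := by
            funext i
            simp [hBdef, mulVec, dotProduct, Finset.mul_sum]
            refine Finset.sum_congr rfl fun j _ => ?_
            ring
          rw [hBv]
          have : star x ⬝ᵥ (fun i => y i * (star y ⬝ᵥ x)) = (star x ⬝ᵥ y) * (star y ⬝ᵥ x) := by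
            simp [dotProduct, Finset.sum_mul]
            refine Finset.sum_congr rfl fun j _ => ?_
            ring
          rw [this]
          have hst : star y ⬝ᵥ x = star (star x ⬝ᵥ y) := star_dotProduct _ _
          rw [hst, mul_comm]
          exact star_mul_self_nonneg _
      have hBmul : ((1 : Matrix (Fin n) (Fin n) ℂ) - A) * B = 0 := by
        ext i j
        have : (((1 : Matrix (Fin n) (Fin n) ℂ) - A) * B) i j
            = (((1 : Matrix (Fin n) (Fin n) ℂ) - A) *ᵥ y) i * star (y j) := by
          simp [Matrix.mul_apply, hBdef, mulVec, dotProduct, Finset.sum_mul]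
          refine Finset.sum_congr rfl fun k _ => ?_
          ring
        rw [this, hy]
        simp
      have hdiag : ∀ i, (B i i).re = ‖y i‖ ^ 2 := by
        intro i
        simp [hBdef, Complex.star_def, Complex.mul_conj]
        norm_cast
        exact Complex.normSq_eq_norm_sq _
      have h0 := hcB B hBpsd hBmul
      have h1 : 0 ≤ ∑ i, c i * ‖y i‖ ^ 2 := by
        calc (0:ℝ) ≤ ∑ i, c i * (B i i).re := h0
          _ = ∑ i, c i * ‖y i‖ ^ 2 := Finset.sum_congr rfl fun i _ => by rw [hdiag]
      have h2 : ∑ i, c' i * ‖y i‖ ^ 2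
          = ∑ i, c i * ‖y i‖ ^ 2 + ε * ∑ i, ‖y i‖ ^ 2 := by
        rw [Finset.mul_sum, ← Finset.sum_add_distrib]
        refine Finset.sum_congr rfl fun i _ => ?_
        rw [hc']
        ring
      linarith
    -- quadratic forms
    set N : Matrix (Fin n) (Fin n) ℂ := (1 : Matrix (Fin n) (Fin n) ℂ) - A with hN
    set Cm : Matrix (Fin n) (Fin n) ℂ := Matrix.diagonal (fun i => (c' i : ℂ)) with hCm
    set Q : (Fin n → ℂ) → ℝ := fun x => (star x ⬝ᵥ N *ᵥ x).re with hQ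
    set R : (Fin n → ℂ) → ℝ := fun x => ∑ i, c' i * ‖x i‖ ^ 2 with hR
    have hQ0 : ∀ x, 0 ≤ Q x := fun x => (Complex.le_def.mp (hI.dotProduct_mulVec_nonneg x)).1
    have hherm : ∀ t : ℝ, (N + (t : ℂ) • Cm).IsHermitian := by
      intro t
      refine IsHermitian.add hI.1 ?_
      have hCmh : Cmᴴ = Cm := by
        rw [hCm, diagonal_conjTranspose]
        have hsf : (star fun i => ((c' i : ℝ) : ℂ)) = fun i => ((c' i : ℝ) : ℂ) := by
          funext i
          exact Complex.conj_ofReal _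
        rw [hsf]
      have hst : star ((t : ℝ) : ℂ) = ((t : ℝ) : ℂ) := by
        simp [Complex.star_def, Complex.conj_ofReal]
      show ((t : ℂ) • Cm)ᴴ = (t : ℂ) • Cm
      rw [conjTranspose_smul, hst, hCmh]
    have hquad : ∀ (t : ℝ) (x : Fin n → ℂ),
        (star x ⬝ᵥ (N + (t : ℂ) • Cm) *ᵥ x).re = Q x + t * R x := by
      intro t x
      have hsplit : star x ⬝ᵥ (N + (t : ℂ) • Cm) *ᵥ x
          = star x ⬝ᵥ N *ᵥ x + ((t * ∑ i, c' i * ‖x i‖ ^ 2 : ℝ) : ℂ) := by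
        rw [add_mulVec, dotProduct_add, smul_mulVec, dotProduct_smul, hCm,
          quad_diagonal, smul_eq_mul]
        push_cast
        ring
      rw [hsplit, Complex.add_re, Complex.ofReal_re]
    -- existence of t0 with PSD
    have ht0 : ∃ t : ℝ, 0 < t ∧ (N + (t : ℂ) • Cm).PosSemidef := by
      by_contra hcon
      push_neg at hcon
      have key : ∀ k : ℕ, ∃ y : Fin n → ℂ, ‖y‖ = 1 ∧
          Q y + (1 / ((k : ℝ) + 1)) * R y < 0 := by
        intro k
        have htk : (0 : ℝ) < 1 / ((k : ℝ) + 1) := by positivity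
        have hnpsd := hcon (1 / ((k : ℝ) + 1)) htk
        have hnpsd' : ¬ ∀ x : Fin n → ℂ,
            0 ≤ star x ⬝ᵥ (N + ((1 / ((k : ℝ) + 1) : ℝ) : ℂ) • Cm) *ᵥ x :=
          fun hall => hnpsd (PosSemidef.of_dotProduct_mulVec_nonneg (hherm _) hall)
        rw [not_forall] at hnpsd'
        obtain ⟨x, hx⟩ := hnpsd'
        have him : (star x ⬝ᵥ (N + ((1 / ((k : ℝ) + 1) : ℝ) : ℂ) • Cm) *ᵥ x).im = 0 :=
          herm_quad_real (hherm _) x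
        have hre : (star x ⬝ᵥ (N + ((1 / ((k : ℝ) + 1) : ℝ) : ℂ) • Cm) *ᵥ x).re < 0 := by
          by_contra hre
          push_neg at hre
          refine hx (Complex.le_def.mpr ⟨?_, ?_⟩)
          · rw [Complex.zero_re]; exact hre
          · rw [Complex.zero_im]; exact him.symm
        rw [hquad] at hre
        have hxne : x ≠ 0 := by
          intro h0
          rw [h0] at hre
          simp [hQ, hR] at hre
        set r : ℝ := ‖x‖⁻¹ with hr
        have hrpos : 0 < r := by
          rw [hr]
          exact inv_pos.mpr (norm_pos_iff.mpr hxne)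
        refine ⟨(r : ℂ) • x, ?_, ?_⟩
        · rw [norm_smul]
          simp [hr, norm_inv]
          rw [inv_mul_cancel₀ (norm_ne_zero_iff.mpr hxne)]
        · have hQs : Q ((r : ℂ) • x) = r ^ 2 * Q x := by
            rw [hQ]
            simp only
            rw [quad_smul]
            have : star (r : ℂ) * (r : ℂ) = ((r ^ 2 : ℝ) : ℂ) := by
              rw [Complex.star_def, Complex.conj_ofReal]
              push_cast
              ring
            rw [this]
            simp [Complex.mul_re, ← Complex.ofReal_pow, Complex.ofReal_re,
              Complex.ofReal_im]
          have hRs : R ((r : ℂ) • x) = r ^ 2 * R x := by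
            rw [hR]
            simp only
            rw [Finset.mul_sum]
            refine Finset.sum_congr rfl fun i _ => ?_
            have hni : ‖((r : ℂ) • x) i‖ = |r| * ‖x i‖ := by
              simp [norm_smul, Complex.norm_real, Real.norm_eq_abs]
            rw [hni, mul_pow, sq_abs]
            ring
          rw [hQs, hRs]
          have hrr : r ^ 2 * Q x + 1 / ((k : ℝ) + 1) * (r ^ 2 * R x)
              = r ^ 2 * (Q x + 1 / ((k : ℝ) + 1) * R x) := by ring
          rw [hrr]
          exact mul_neg_of_pos_of_neg (by positivity) hre
      choose y hy1 hy2 using key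
      have hmem : ∀ k, y k ∈ Metric.sphere (0 : Fin n → ℂ) 1 := by
        intro k
        rw [mem_sphere_zero_iff_norm]
        exact hy1 k
      obtain ⟨y', hy', φ, hφ, htd⟩ := (isCompact_sphere (0 : Fin n → ℂ) 1).tendsto_subseq hmem
      have hQc : Continuous Q := by
        rw [hQ]
        exact Complex.continuous_re.comp
          ((continuous_star).dotProduct (continuous_const.matrix_mulVec continuous_id))
      have hRc : Continuous R := by
        rw [hR]
        refine continuous_finset_sum _ fun i _ => ?_
        exact continuous_const.mul ((continuous_norm.comp (continuous_apply i)).pow 2)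
      have hQlim : Tendsto (fun k => Q (y (φ k))) atTop (𝓝 (Q y')) :=
        (hQc.tendsto _).comp htd
      have hRlim : Tendsto (fun k => R (y (φ k))) atTop (𝓝 (R y')) :=
        (hRc.tendsto _).comp htd
      have htk0 : Tendsto (fun k => 1 / ((φ k : ℝ) + 1)) atTop (𝓝 0) :=
        tendsto_one_div_add_atTop_nhds_zero_nat.comp hφ.tendsto_atTop
      have hRneg : ∀ k, R (y (φ k)) < 0 := by
        intro k
        have h1 := hy2 (φ k)
        have h2 := hQ0 (y (φ k))
        have h3 : (0:ℝ) < 1 / ((φ k : ℝ) + 1) := by positivity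
        nlinarith
      have hRy' : R y' ≤ 0 :=
        le_of_tendsto hRlim (Filter.Eventually.of_forall fun k => le_of_lt (hRneg k))
      have hQy' : Q y' ≤ 0 := by
        have hle : ∀ k, Q (y (φ k)) ≤ (1 / ((φ k : ℝ) + 1)) * (- R (y (φ k))) := by
          intro k
          have := hy2 (φ k)
          nlinarith
        have hlim2 : Tendsto (fun k => (1 / ((φ k : ℝ) + 1)) * (- R (y (φ k)))) atTop
            (𝓝 (0 * (- R y'))) := htk0.mul hRlim.neg
        rw [zero_mul] at hlim2
        exact le_of_tendsto_of_tendsto' hQlim hlim2 hle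
      have hQy'0 : Q y' = 0 := le_antisymm hQy' (hQ0 y')
      have hz : star y' ⬝ᵥ N *ᵥ y' = 0 := by
        apply Complex.ext
        · simpa [hQ] using hQy'0
        · simpa using herm_quad_real hI.1 y'
      have hker' : N *ᵥ y' = 0 := (hI.dotProduct_mulVec_zero_iff y').mp hz
      have hy'ne : y' ≠ 0 := by
        intro h0
        rw [h0] at hy'
        simp at hy'
      obtain ⟨i0, hi0⟩ := Function.ne_iff.mp hy'ne
      have hsumpos : 0 < ∑ i, ‖y' i‖ ^ 2 := by
        refine Finset.sum_pos' (fun i _ => by positivity) ⟨i0, Finset.mem_univ i0, ?_⟩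
        have : ‖y' i0‖ ≠ 0 := norm_ne_zero_iff.mpr hi0
        positivity
      have := hker y' hker'
      have : ε * ∑ i, ‖y' i‖ ^ 2 ≤ R y' := this
      nlinarith
    obtain ⟨t₀, ht₀, hpsd₀⟩ := ht0
    have hevPSD : ∀ᶠ t in 𝓝[>] (0 : ℝ),
        (Matrix.diagonal (fun i => ((1 + t * c' i : ℝ) : ℂ)) - A).PosSemidef := by
      filter_upwards [Ioc_mem_nhdsGT_of_mem (Set.mem_Ico.mpr ⟨le_refl 0, ht₀⟩)] with t ht
      obtain ⟨ht1, ht2⟩ := ht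
      have hcomb : Matrix.diagonal (fun i => ((1 + t * c' i : ℝ) : ℂ)) - A
          = ((1 - t / t₀ : ℝ) : ℂ) • N + ((t / t₀ : ℝ) : ℂ) • (N + (t₀ : ℂ) • Cm) := by
        ext i j
        by_cases hij : i = j
        · subst hij
          simp [Matrix.diagonal_apply_eq, Matrix.sub_apply, Matrix.add_apply,
            Matrix.smul_apply, hN, hCm, Matrix.one_apply_eq, smul_eq_mul]
          push_cast
          field_simp
          ring
        · simp [Matrix.diagonal_apply_ne _ hij, Matrix.sub_apply, Matrix.add_apply,
            Matrix.smul_apply, hN, hCm, Matrix.one_apply_ne hij,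
            Matrix.diagonal_apply_ne _ hij, smul_eq_mul]
          ring
      rw [hcomb]
      refine PosSemidef.add (psd_smul hI ?_) (psd_smul hpsd₀ ?_)
      · have : t / t₀ ≤ 1 := (div_le_one ht₀).mpr ht2
        linarith
      · positivity
    have hevProd := eventually_prod_lt c' hsum'
    obtain ⟨t, hpsdt, hprodt⟩ := (hevPSD.and hevProd).exists
    have := hopt (fun i => 1 + t * c' i) hpsdt
    linarith
end

section
/- Let U ∈ ℂ^{d×n} have rank d and suppose U†U has all diagonal entries equal to 1. Let A = U†(UU†)^{-1}U. Then rel(A) := inf{ Π_i D_{ii} : D diagonal, D ⪰ A } = 1. -/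
open scoped Matrix ComplexOrder

lemma psd_diag_nonneg {m : Type*} [Fintype m] [DecidableEq m] {M : Matrix m m ℂ}
    (hM : M.PosSemidef) (i : m) : 0 ≤ M i i := by
  simpa [dotProduct, Pi.single_apply] using hM.dotProduct_mulVec_nonneg (Pi.single i 1)

lemma trace_nonneg_of_posSemidef {m : Type*} [Fintype m] [DecidableEq m] {M : Matrix m m ℂ}
    (hM : M.PosSemidef) : 0 ≤ M.trace := by
  rw [Matrix.trace]
  exact Finset.sum_nonneg fun i _ => psd_diag_nonneg hM i

lemma trace_mul_nonneg {m : Type*} [Fintype m] [DecidableEq m] {P Q : Matrix m m ℂ}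
    (hP : P.PosSemidef) (hQ : Q.PosSemidef) : 0 ≤ (P * Q).trace := by
  obtain ⟨C, hC⟩ : ∃ C : Matrix m m ℂ, Q = Cᴴ * C := by
    open scoped MatrixOrder in
    obtain ⟨B, hB⟩ := CStarAlgebra.nonneg_iff_eq_star_mul_self.mp hQ.nonneg
    exact ⟨B, hB⟩
  rw [hC, ← Matrix.mul_assoc, Matrix.trace_mul_cycle]
  exact trace_nonneg_of_posSemidef (hP.mul_mul_conjTranspose_same C)

theorem rel_projection_eq_one (d n : ℕ) (U : Matrix (Fin d) (Fin n) ℂ)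
    (hU : U.rank = d) (hdiag : ∀ i, (Uᴴ * U) i i = 1) :
    sInf (relSet (Uᴴ * (U * Uᴴ)⁻¹ * U)) = 1 := by
  classical
  set G := (U * Uᴴ)⁻¹ with hGdef
  set A := Uᴴ * G * U with hAdef
  -- invertibility of U * Uᴴ
  have hrank : (U * Uᴴ).rank = d := by rw [U.rank_self_mul_conjTranspose, hU]
  have hsurj : Function.Surjective (U * Uᴴ).mulVec := by
    have h1 : LinearMap.range (U * Uᴴ).mulVecLin = ⊤ := by
      apply Submodule.eq_top_of_finrank_eq
      unfold Matrix.rank at hrank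
      rw [hrank, Module.finrank_fin_fun]
    intro y
    obtain ⟨x, hx⟩ := LinearMap.range_eq_top.mp h1 y
    exact ⟨x, hx⟩
  have hunit : IsUnit (U * Uᴴ) := Matrix.mulVec_surjective_iff_isUnit.mp hsurj
  have hdet : IsUnit (U * Uᴴ).det := (Matrix.isUnit_iff_isUnit_det _).mp hunit
  have hinv : G * (U * Uᴴ) = 1 := Matrix.nonsing_inv_mul _ hdet
  have hinv' : (U * Uᴴ) * G = 1 := Matrix.mul_nonsing_inv _ hdet
  have hAUH : A * Uᴴ = Uᴴ := by
    rw [hAdef]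
    simp only [Matrix.mul_assoc]
    rw [hinv, Matrix.mul_one]
  have hUA : U * A = U := by
    rw [hAdef, ← Matrix.mul_assoc, ← Matrix.mul_assoc, hinv', Matrix.one_mul]
  have hG_psd : G.PosSemidef := (Matrix.posSemidef_self_mul_conjTranspose U).inv
  have hA_psd : A.PosSemidef := hG_psd.conjTranspose_mul_mul_same U
  have hAH : Aᴴ = A := hA_psd.1
  have hAA : A * A = A := by
    nth_rewrite 1 [hAdef]
    rw [Matrix.mul_assoc (Uᴴ * G) U A, hUA, ← hAdef]
  have hIA : (1 - A).PosSemidef := by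
    have h0 : A * (1 - A) = 0 := by rw [Matrix.mul_sub, Matrix.mul_one, hAA, sub_self]
    have h1 : (1 - A) = (1 - A)ᴴ * (1 - A) := by
      rw [Matrix.conjTranspose_sub, Matrix.conjTranspose_one, hAH, Matrix.sub_mul,
        Matrix.one_mul, h0, sub_zero]
    rw [h1]
    exact Matrix.posSemidef_conjTranspose_mul_self _
  have hmem : (1 : ℝ) ∈ relSet A := ⟨fun _ => 1, by simpa using hIA, by simp⟩
  have hlb : ∀ t ∈ relSet A, (1 : ℝ) ≤ t := by
    rintro t ⟨v, hPSD, rfl⟩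
    -- Positive definiteness of U * Uᴴ and G
    have hUUH_pd : (U * Uᴴ).PosDef := by
      refine Matrix.PosDef.of_dotProduct_mulVec_pos (Matrix.posSemidef_self_mul_conjTranspose U).1 fun x hx => ?_
      have hy : Uᴴ *ᵥ x ≠ 0 := by
        intro h
        apply hx
        have h2 : (U * Uᴴ) *ᵥ x = 0 := by
          rw [← Matrix.mulVec_mulVec, h, Matrix.mulVec_zero]
        have hinj := Matrix.mulVec_injective_iff_isUnit.mpr hunit
        have := hinj (h2.trans ((U * Uᴴ).mulVec_zero).symm)
        exact this
      have heq : star x ⬝ᵥ ((U * Uᴴ) *ᵥ x) = star (Uᴴ *ᵥ x) ⬝ᵥ (Uᴴ *ᵥ x) := by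
        rw [← Matrix.mulVec_mulVec, Matrix.dotProduct_mulVec, Matrix.star_mulVec,
          Matrix.conjTranspose_conjTranspose]
      rw [heq]
      exact Matrix.dotProduct_star_self_pos_iff.mpr hy
    have hGpd : G.PosDef := hUUH_pd.inv
    -- diagonal entries of A are positive
    have hdiagA : ∀ i, 0 < A i i := by
      intro i
      have hcol : U *ᵥ Pi.single i 1 ≠ 0 := by
        intro h
        have h1 := hdiag i
        have hki : ∀ k, U k i = 0 := by
          intro k
          have := congrFun h k
          simpa [Matrix.mulVec, dotProduct, Pi.single_apply] using this
        rw [Matrix.mul_apply] at h1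
        simp [Matrix.conjTranspose_apply, hki] at h1
      have key : A i i = star (U *ᵥ Pi.single i 1) ⬝ᵥ (G *ᵥ (U *ᵥ Pi.single i 1)) := by
        rw [hAdef]
        simp only [Matrix.mul_apply, Matrix.mulVec, dotProduct,
          Matrix.conjTranspose_apply, Pi.single_apply, Pi.star_apply]
        simp only [mul_ite, mul_one, mul_zero, Finset.sum_ite_eq', Finset.mem_univ, if_true]
        simp only [Finset.sum_mul, Finset.mul_sum]
        rw [Finset.sum_comm]
        refine Finset.sum_congr rfl fun a _ => Finset.sum_congr rfl fun b _ => by ring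
      rw [key]
      exact hGpd.dotProduct_mulVec_pos hcol
    -- positivity of v
    have hdpos : ∀ i, 0 < v i := by
      intro i
      have h1 : 0 ≤ (Matrix.diagonal (fun j => (v j : ℂ)) - A) i i := psd_diag_nonneg hPSD i
      rw [Matrix.sub_apply, Matrix.diagonal_apply_eq] at h1
      have h2 : (0 : ℂ) < (v i : ℂ) := lt_of_lt_of_le (hdiagA i) (sub_nonneg.mp h1)
      exact_mod_cast h2
    -- square root scaling matrices
    set s : Fin n → ℝ := fun i => (Real.sqrt (v i))⁻¹ with hsdef
    set S : Matrix (Fin n) (Fin n) ℂ := Matrix.diagonal (fun i => (s i : ℂ)) with hSdef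
    set T : Matrix (Fin n) (Fin n) ℂ := Matrix.diagonal (fun i => ((Real.sqrt (v i) : ℝ) : ℂ))
      with hTdef
    have hsqrt_pos : ∀ i, 0 < Real.sqrt (v i) := fun i => Real.sqrt_pos.mpr (hdpos i)
    have hss : ∀ i, s i * s i = (v i)⁻¹ := fun i => by
      rw [hsdef, ← mul_inv, Real.mul_self_sqrt (hdpos i).le]
    have hST : S * T = 1 := by
      have hf : (fun i => (s i : ℂ) * ((Real.sqrt (v i) : ℝ) : ℂ)) = fun _ => (1 : ℂ) := by
        funext i
        rw [← Complex.ofReal_mul, hsdef, inv_mul_cancel₀ (hsqrt_pos i).ne', Complex.ofReal_one]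
      rw [hSdef, hTdef, Matrix.diagonal_mul_diagonal, hf, Matrix.diagonal_one]
    have hTS : T * S = 1 := by
      have hf : (fun i => ((Real.sqrt (v i) : ℝ) : ℂ) * (s i : ℂ)) = fun _ => (1 : ℂ) := by
        funext i
        rw [← Complex.ofReal_mul, hsdef, mul_inv_cancel₀ (hsqrt_pos i).ne', Complex.ofReal_one]
      rw [hSdef, hTdef, Matrix.diagonal_mul_diagonal, hf, Matrix.diagonal_one]
    have hSH : Sᴴ = S := by
      ext i j
      simp only [hSdef, Matrix.conjTranspose_apply, Matrix.diagonal_apply, apply_ite,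
        star_zero, RCLike.star_def, Complex.conj_ofReal]
      by_cases h : i = j <;> simp [h, eq_comm]
    have hTH : Tᴴ = T := by
      ext i j
      simp only [hTdef, Matrix.conjTranspose_apply, Matrix.diagonal_apply, apply_ite,
        star_zero, RCLike.star_def, Complex.conj_ofReal]
      by_cases h : i = j <;> simp [h, eq_comm]
    have hSS : S * S = Matrix.diagonal (fun i => (((v i)⁻¹ : ℝ) : ℂ)) := by
      have hf : (fun i => (s i : ℂ) * (s i : ℂ)) = fun i => (((v i)⁻¹ : ℝ) : ℂ) := by
        funext i
        rw [← Complex.ofReal_mul, hss]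
      rw [hSdef, Matrix.diagonal_mul_diagonal, hf]
    have hSDS : S * Matrix.diagonal (fun i => (v i : ℂ)) * S = 1 := by
      have hf : (fun i => (s i : ℂ) * (v i : ℂ) * (s i : ℂ)) = fun _ => (1 : ℂ) := by
        funext i
        rw [← Complex.ofReal_mul, ← Complex.ofReal_mul]
        norm_cast
        calc s i * v i * s i = v i * (s i * s i) := by ring
          _ = v i * (v i)⁻¹ := by rw [hss]
          _ = 1 := mul_inv_cancel₀ (hdpos i).ne'
      rw [hSdef, Matrix.diagonal_mul_diagonal, Matrix.diagonal_mul_diagonal, hf,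
        Matrix.diagonal_one]
    -- N := S * A * S is PSD, and 1 - N is PSD
    have hN_psd : (S * A * S).PosSemidef := by
      have := hA_psd.conjTranspose_mul_mul_same S
      rwa [hSH] at this
    have hNH : (S * A * S)ᴴ = S * A * S := hN_psd.1
    have h1N : (1 - S * A * S).PosSemidef := by
      have h := hPSD.conjTranspose_mul_mul_same S
      rw [hSH, Matrix.mul_sub, Matrix.sub_mul, hSDS] at h
      exact h
    have hNN : (S * A * S - S * A * S * (S * A * S)).PosSemidef := by
      have e : S * A * S - S * A * S * (S * A * S) =
          (1 - S * A * S)ᴴ * (S * A * S) * (1 - S * A * S) +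
          (S * A * S)ᴴ * (1 - S * A * S) * (S * A * S) := by
        rw [Matrix.conjTranspose_sub, Matrix.conjTranspose_one, hNH]
        noncomm_ring
      rw [e]
      exact (hN_psd.conjTranspose_mul_mul_same _).add (h1N.conjTranspose_mul_mul_same _)
    have hB_psd : (Uᴴ * U).PosSemidef := Matrix.posSemidef_conjTranspose_mul_self U
    have hB'_psd : (T * (Uᴴ * U) * T).PosSemidef := by
      have := hB_psd.conjTranspose_mul_mul_same T
      rwa [hTH] at this
    have htr : 0 ≤ ((S * A * S - S * A * S * (S * A * S)) * (T * (Uᴴ * U) * T)).trace :=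
      trace_mul_nonneg hNN hB'_psd
    have hAB : A * (Uᴴ * U) = Uᴴ * U := by rw [← Matrix.mul_assoc, hAUH]
    have hBA : (Uᴴ * U) * A = Uᴴ * U := by rw [Matrix.mul_assoc, hUA]
    -- first trace
    have htr1 : ((S * A * S) * (T * (Uᴴ * U) * T)).trace = (Uᴴ * U).trace := by
      have e1 : (S * A * S) * (T * (Uᴴ * U) * T) = S * (A * (Uᴴ * U) * T) := by
        calc (S * A * S) * (T * (Uᴴ * U) * T) = S * A * (S * T) * ((Uᴴ * U) * T) := by
              simp only [Matrix.mul_assoc]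
          _ = S * (A * (Uᴴ * U) * T) := by
              rw [hST, Matrix.mul_one]
              simp only [Matrix.mul_assoc]
      rw [e1, Matrix.trace_mul_comm, Matrix.mul_assoc, hTS, Matrix.mul_one, hAB]
    -- second trace
    have htr2 : ((S * A * S * (S * A * S)) * (T * (Uᴴ * U) * T)).trace =
        (Matrix.diagonal (fun i => (((v i)⁻¹ : ℝ) : ℂ)) * (Uᴴ * U)).trace := by
      have e2 : (S * A * S * (S * A * S)) * (T * (Uᴴ * U) * T) =
          S * (A * (S * S) * A * (Uᴴ * U) * T) := by
        calc (S * A * S * (S * A * S)) * (T * (Uᴴ * U) * T)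
            = S * A * (S * S) * A * (S * T) * ((Uᴴ * U) * T) := by
              simp only [Matrix.mul_assoc]
          _ = S * (A * (S * S) * A * (Uᴴ * U) * T) := by
              rw [hST, Matrix.mul_one]
              simp only [Matrix.mul_assoc]
      rw [e2, Matrix.trace_mul_comm, Matrix.mul_assoc, hTS, Matrix.mul_one, hSS,
        Matrix.mul_assoc (A * Matrix.diagonal _) A (Uᴴ * U), hAB,
        Matrix.trace_mul_cycle, hBA, Matrix.trace_mul_comm]
    -- trace values
    have htrB : (Uᴴ * U).trace = (n : ℂ) := by
      rw [Matrix.trace]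
      simp only [Matrix.diag]
      rw [Finset.sum_congr rfl fun i _ => hdiag i]
      simp
    have htrD : (Matrix.diagonal (fun i => (((v i)⁻¹ : ℝ) : ℂ)) * (Uᴴ * U)).trace =
        ((∑ i, (v i)⁻¹ : ℝ) : ℂ) := by
      rw [Matrix.trace]
      simp only [Matrix.diag, Matrix.diagonal_mul]
      rw [Finset.sum_congr rfl fun i _ => by rw [hdiag i, mul_one]]
      push_cast
      rfl
    -- the trace inequality
    have hsum : (∑ i, (v i)⁻¹ : ℝ) ≤ n := by
      rw [Matrix.sub_mul, Matrix.trace_sub, htr1, htr2, htrB, htrD] at htr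
      have := sub_nonneg.mp htr
      exact_mod_cast this
    -- AM-GM
    rcases Nat.eq_zero_or_pos n with hn | hn
    · subst hn
      simp
    · have hnR : (0 : ℝ) < n := by exact_mod_cast hn
      have hw : ∑ _i : Fin n, (1 / (n : ℝ)) = 1 := by
        rw [Finset.sum_const, Finset.card_univ, Fintype.card_fin, nsmul_eq_mul]
        field_simp
      have hgm := Real.geom_mean_le_arith_mean_weighted Finset.univ
        (fun _ => 1 / (n : ℝ)) (fun i => (v i)⁻¹)
        (fun i _ => by positivity) hw (fun i _ => (inv_pos.mpr (hdpos i)).le)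
      have hrhs : ∑ i, (1 / (n : ℝ)) * (v i)⁻¹ ≤ 1 := by
        rw [← Finset.mul_sum]
        rw [div_mul_eq_mul_div, one_mul, div_le_one hnR]
        exact hsum
      have hlhs : (∏ i, (v i)⁻¹) ^ ((n : ℝ)⁻¹) = ∏ i, ((v i)⁻¹) ^ (1 / (n : ℝ)) := by
        rw [one_div]
        exact (Real.finset_prod_rpow Finset.univ _ (fun i _ => (inv_pos.mpr (hdpos i)).le) _).symm
      have hkey : (∏ i, (v i)⁻¹) ^ ((n : ℝ)⁻¹) ≤ 1 := by
        rw [hlhs]; exact le_trans (by simpa using hgm) hrhs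
      have hprod_pos : (0 : ℝ) < ∏ i, v i := Finset.prod_pos fun i _ => hdpos i
      have hinv_le : (∏ i, (v i)⁻¹) ≤ 1 := by
        by_contra hcon
        push_neg at hcon
        have : 1 < (∏ i, (v i)⁻¹) ^ ((n : ℝ)⁻¹) :=
          Real.one_lt_rpow_iff_of_pos (lt_trans one_pos hcon) |>.mpr
            (Or.inl ⟨hcon, inv_pos.mpr hnR⟩)
        linarith
      rw [Finset.prod_inv_distrib] at hinv_le
      have hcc : (∏ i, v i) * (∏ i, v i)⁻¹ = 1 := mul_inv_cancel₀ hprod_pos.ne'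
      nlinarith [hinv_le, hprod_pos, hcc]
  exact le_antisymm (csInf_le ⟨1, fun t ht => hlb t ht⟩ hmem) (le_csInf ⟨1, hmem⟩ hlb)
end
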